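/- Let V be a finite vertex set and w : V × V → ℝ≥0 a symmetric nonnegative weight function with vol(V) > 0. Suppose (C*, C̄*) is a partition of V into nonempty sets with min(vol(C*), vol(C̄*)) = y·vol(V) for some y with 0 < y < 1/2 and vol(C*), vol(C̄*) > 0, and (C_B, C̄_B) is a volume-balanced partition with vol(C_B) = vol(C̄_B) = vol(V)/2. If Cut(C_B, C̄_B) > 0 and the cut-ratio q = Cut(C*, C̄*)/Cut(C_B, C̄_B) satisfies q > 4y(1−y), then NCut(C_B, C̄_B) < NCut(C*, C̄*); that is, the Normalized Cut objective prefers the balanced cut over the unbalanced cut. -/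

import Mathlib

open Finset

/-- Cut value between two vertex sets. -/
noncomputable def cutVal {V : Type*} [Fintype V] (w : V → V → ℝ) (C D : Finset V) : ℝ :=
  ∑ u ∈ C, ∑ v ∈ D, w u v

/-- Volume of a vertex set: total weight of edges incident to it. -/
noncomputable def volVal {V : Type*} [Fintype V] (w : V → V → ℝ) (C : Finset V) : ℝ :=
  ∑ u ∈ C, ∑ v ∈ (Finset.univ : Finset V), w u v

/-- Normalized Cut objective of the partition `(C, Cᶜ)`. -/
noncomputable def ncutVal {V : Type*} [Fintype V] [DecidableEq V] (w : V → V → ℝ)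
    (C : Finset V) : ℝ :=
  cutVal w C Cᶜ *
    (volVal w (Finset.univ : Finset V) / volVal w C +
      volVal w (Finset.univ : Finset V) / volVal w Cᶜ)

/-- If the data is `y`-unbalanced in volume with `0 < y < 1/2` and the cut-ratio
`q = Cut(C*,C̄*)/Cut(C_B,C̄_B)` exceeds `4y(1-y)`, then Normalized Cut prefers the
volume-balanced cut. -/
theorem ncut_prefers_balanced_cut
    {V : Type*} [Fintype V] [DecidableEq V]
    (w : V → V → ℝ)
    (hw_nonneg : ∀ u v, 0 ≤ w u v)
    (hw_symm : ∀ u v, w u v = w v u)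
    (hvol_pos : 0 < volVal w (Finset.univ : Finset V))
    (Cstar CB : Finset V) (y : ℝ)
    (hstar_ne : Cstar.Nonempty) (hstar_c_ne : Cstarᶜ.Nonempty)
    (hvolstar_pos : 0 < volVal w Cstar) (hvolstar_c_pos : 0 < volVal w Cstarᶜ)
    (hy_pos : 0 < y) (hy_lt : y < 1 / 2)
    (hy : min (volVal w Cstar) (volVal w Cstarᶜ) = y * volVal w (Finset.univ : Finset V))
    (hCB : volVal w CB = volVal w (Finset.univ : Finset V) / 2)
    (hCBc : volVal w CBᶜ = volVal w (Finset.univ : Finset V) / 2)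
    (hcutB_pos : 0 < cutVal w CB CBᶜ)
    (hq : cutVal w Cstar Cstarᶜ / cutVal w CB CBᶜ > 4 * y * (1 - y)) :
    ncutVal w CB < ncutVal w Cstar := by

  set T := volVal w (Finset.univ : Finset V) with hT
  have hTne : T ≠ 0 := ne_of_gt hvol_pos
  have hsum : volVal w Cstar + volVal w Cstarᶜ = T := by
    rw [hT]
    simpa [volVal] using Finset.sum_add_sum_compl Cstar (fun u => ∑ v, w u v)
  have hy1 : y < 1 := by linarith
  have hy1' : 0 < 1 - y := by linarith
  have hq' : cutVal w Cstar Cstarᶜ > 4 * y * (1 - y) * cutVal w CB CBᶜ := by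
    exact (lt_div_iff₀ hcutB_pos).mp hq
  have hB : ncutVal w CB = 4 * cutVal w CB CBᶜ := by
    rw [ncutVal, hCB, hCBc]
    field_simp
    ring
  have hkey : T / volVal w Cstar + T / volVal w Cstarᶜ = 1 / y + 1 / (1 - y) := by
    rcases min_cases (volVal w Cstar) (volVal w Cstarᶜ) with ⟨h1, _⟩ | ⟨h1, _⟩
    · have hC : volVal w Cstar = y * T := by rw [← hy, h1]
      have hCc : volVal w Cstarᶜ = (1 - y) * T := by
        have := hsum; rw [hC] at this; linarith
      rw [hC, hCc, mul_comm y T, mul_comm (1 - y) T, div_mul_eq_div_div,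
        div_mul_eq_div_div, div_self hTne]
    · have hCc : volVal w Cstarᶜ = y * T := by rw [← hy, h1]
      have hC : volVal w Cstar = (1 - y) * T := by
        have := hsum; rw [hCc] at this; linarith
      rw [hC, hCc, mul_comm y T, mul_comm (1 - y) T, div_mul_eq_div_div,
        div_mul_eq_div_div, div_self hTne]
      ring
  have hS : ncutVal w Cstar = cutVal w Cstar Cstarᶜ * (1 / y + 1 / (1 - y)) := by
    rw [ncutVal, hkey]
  rw [hB, hS]
  have h1 : 1 / y + 1 / (1 - y) = 1 / (y * (1 - y)) := by
    field_simp
    ring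
  rw [h1]
  have hpos : 0 < y * (1 - y) := mul_pos hy_pos hy1'
  rw [mul_one_div, lt_div_iff₀ hpos]
  nlinarith [hq']
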